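/- Let G be a simple graph on Fin k (k ≥ 2) that is connected and d-regular with d ≥ 1, and let P : Fin k → ℝ be a probability vector with P i > 0 for all i and ∑ i, P i = 1. Define the k×k real symmetric matrix A_G(P) by A_G(P)_ii = (1/d) · ∑_{j ∈ N_G(i)} (P j − P i)/(P i + P j), A_G(P)_ij = −2√(P i · P j)/(d (P i + P j)) whenever {i,j} is an edge of G, and A_G(P)_ij = 0 otherwise. Then A_G(P) · v(P) = −v(P) where v(P)_i = √(P i), −1 is the smallest eigenvalue of A_G(P), and every x ∈ ℝ^k with A_G(P) · x = −x is a scalar multiple of v(P). -/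

import Mathlib

open Matrix Finset

/-- Let `G` be a connected `d`-regular simple graph on `Fin k`
(`k ≥ 2`, `d ≥ 1`) and `P` a positive probability vector.  The warm-started
XY-mixer with topology `G`, i.e. the matrix `A_G(P)` with
`A i i = (1/d) ∑_{j ∈ N_G(i)} (P j - P i)/(P i + P j)`,
`A i j = -2√(P i · P j)/(d(P i + P j))` on edges and `0` otherwise, satisfies
`A_G(P)·v(P) = -v(P)` (with `v(P) i = √(P i)`), `-1` is the smallest eigenvalue
of `A_G(P)`, and every `x` with `A_G(P)·x = -x` is a scalar multiple of `v(P)`. -/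
theorem statement6 (k : ℕ) (hk : 2 ≤ k)
    (G : SimpleGraph (Fin k)) [DecidableRel G.Adj]
    (hconn : G.Connected) (d : ℕ) (hd : 1 ≤ d) (hreg : G.IsRegularOfDegree d)
    (P : Fin k → ℝ) (hpos : ∀ i, 0 < P i) (hsum : ∑ i, P i = 1)
    (A : Matrix (Fin k) (Fin k) ℝ)
    (hA : ∀ i j, A i j =
      if i = j then
        (1 / (d : ℝ)) * ∑ l ∈ G.neighborFinset i, (P l - P i) / (P i + P l)
      else if G.Adj i j then
        -2 * Real.sqrt (P i * P j) / ((d : ℝ) * (P i + P j))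
      else 0)
    (v : Fin k → ℝ) (hv : ∀ i, v i = Real.sqrt (P i)) :
    A.mulVec v = -v ∧
    (∀ μ : ℝ, ∀ x : Fin k → ℝ, x ≠ 0 → A.mulVec x = μ • x → -1 ≤ μ) ∧
    (∀ x : Fin k → ℝ, A.mulVec x = -x → ∃ c : ℝ, x = c • v) := by
  have hd0 : (d : ℝ) ≠ 0 := Nat.cast_ne_zero.mpr (by omega)
  have hdpos : (0 : ℝ) < d := by positivity
  have hPpos : ∀ i j : Fin k, (0:ℝ) < P i + P j := fun i j => by
    have := hpos i; have := hpos j; linarith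
  have hPne : ∀ i j : Fin k, P i + P j ≠ 0 := fun i j => (hPpos i j).ne'
  set s : Fin k → ℝ := fun i => Real.sqrt (P i) with hs
  have hs_pos : ∀ i, 0 < s i := fun i => Real.sqrt_pos.mpr (hpos i)
  have hs_sq : ∀ i, s i * s i = P i := fun i => Real.mul_self_sqrt (hpos i).le
  have hvs : ∀ i, v i = s i := hv
  -- key per-coordinate formula
  have hB : ∀ (x : Fin k → ℝ) (i : Fin k),
      A.mulVec x i + x i =
        (1 / (d : ℝ)) * ∑ j ∈ G.neighborFinset i,
          (2 * s j / (P i + P j)) * (s j * x i - s i * x j) := by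
    intro x i
    have hmv : A.mulVec x i = ∑ j, A i j * x j := by
      simp [Matrix.mulVec, dotProduct]
    have hsplit : ∑ j, A i j * x j =
        A i i * x i + ∑ j ∈ G.neighborFinset i, A i j * x j := by
      rw [← Finset.add_sum_erase Finset.univ _ (Finset.mem_univ i)]
      congr 1
      refine (Finset.sum_subset ?_ ?_).symm
      · intro j hj
        rw [SimpleGraph.mem_neighborFinset] at hj
        exact Finset.mem_erase.mpr ⟨(G.ne_of_adj hj).symm, Finset.mem_univ j⟩
      · intro j hj hjn
        rw [SimpleGraph.mem_neighborFinset] at hjn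
        have hji : i ≠ j := fun h => (Finset.mem_erase.mp hj).1 h.symm
        rw [hA, if_neg hji, if_neg hjn, zero_mul]
    have hdiag : A i i * x i =
        (1 / (d : ℝ)) * ∑ j ∈ G.neighborFinset i, ((P j - P i) / (P i + P j)) * x i := by
      rw [hA, if_pos rfl, mul_assoc, Finset.sum_mul]
    have hoff : ∀ j ∈ G.neighborFinset i, A i j * x j =
        (1 / (d : ℝ)) * ((-2 * (s i * s j) / (P i + P j)) * x j) := by
      intro j hj
      rw [SimpleGraph.mem_neighborFinset] at hj
      rw [hA, if_neg (G.ne_of_adj hj), if_pos hj]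
      rw [Real.sqrt_mul (hpos i).le]
      field_simp
      simp only [hs]
      ring
    have hxi' : ∑ j ∈ G.neighborFinset i, x i = (d : ℝ) * x i := by
      rw [Finset.sum_const, G.card_neighborFinset_eq_degree, hreg i, nsmul_eq_mul]
    have hsum3 : ∑ j ∈ G.neighborFinset i,
        (2 * s j / (P i + P j)) * (s j * x i - s i * x j) =
        (∑ j ∈ G.neighborFinset i, ((P j - P i) / (P i + P j)) * x i) +
        (∑ j ∈ G.neighborFinset i, (-2 * (s i * s j) / (P i + P j)) * x j) +
        (∑ j ∈ G.neighborFinset i, x i) := by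
      rw [← Finset.sum_add_distrib, ← Finset.sum_add_distrib]
      refine Finset.sum_congr rfl fun j hj => ?_
      have h0 : P i + P j ≠ 0 := hPne i j
      rw [← hs_sq i, ← hs_sq j] at h0 ⊢
      field_simp
      have hD : s j ^ 2 + s i ^ 2 ≠ 0 := fun h => h0 (by nlinarith)
      have hinv : (s j ^ 2 + s i ^ 2) * (s j ^ 2 + s i ^ 2)⁻¹ = 1 := mul_inv_cancel₀ hD
      linear_combination x i * hinv
    rw [hmv, hsplit, hdiag, Finset.sum_congr rfl hoff, ← Finset.mul_sum, hsum3, hxi']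
    rw [mul_add, mul_add, one_div, inv_mul_cancel_left₀ hd0]
  -- symmetry swap
  have hswap : ∀ f : Fin k → Fin k → ℝ,
      ∑ i, ∑ j ∈ G.neighborFinset i, f i j = ∑ i, ∑ j ∈ G.neighborFinset i, f j i := by
    intro f
    simp only [SimpleGraph.neighborFinset_eq_filter, Finset.sum_filter]
    rw [Finset.sum_comm]
    refine Finset.sum_congr rfl fun i _ => Finset.sum_congr rfl fun j _ => ?_
    by_cases h : G.Adj i j
    · rw [if_pos h, if_pos (G.adj_symm h)]
    · rw [if_neg h, if_neg (fun h' => h (G.adj_symm h'))]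
  -- quadratic form
  have hQ : ∀ x : Fin k → ℝ,
      ∑ i, x i * (A.mulVec x i + x i) =
        (1 / (d : ℝ)) * ∑ i, ∑ j ∈ G.neighborFinset i,
          (s j * x i - s i * x j) ^ 2 / (P i + P j) := by
    intro x
    have h1 : ∑ i, x i * (A.mulVec x i + x i) =
        (1 / (d : ℝ)) * ∑ i, ∑ j ∈ G.neighborFinset i,
          x i * ((2 * s j / (P i + P j)) * (s j * x i - s i * x j)) := by
      rw [Finset.mul_sum]
      refine Finset.sum_congr rfl fun i _ => ?_
      rw [hB x, ← mul_assoc, mul_comm (x i) ((1:ℝ)/d), mul_assoc, Finset.mul_sum]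
    rw [h1]
    congr 1
    set T := ∑ i, ∑ j ∈ G.neighborFinset i,
        x i * ((2 * s j / (P i + P j)) * (s j * x i - s i * x j)) with hT
    have h2 : T + T = ∑ i, ∑ j ∈ G.neighborFinset i,
        2 * ((s j * x i - s i * x j) ^ 2 / (P i + P j)) := by
      nth_rewrite 2 [hT]
      rw [hswap (fun i j => x i * ((2 * s j / (P i + P j)) * (s j * x i - s i * x j)))]
      rw [hT, ← Finset.sum_add_distrib]
      refine Finset.sum_congr rfl fun i _ => ?_
      rw [← Finset.sum_add_distrib]
      refine Finset.sum_congr rfl fun j hj => ?_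
      rw [add_comm (P j) (P i)]
      have hne : P i + P j ≠ 0 := hPne i j
      field_simp
      ring
    have h3 : ∑ i, ∑ j ∈ G.neighborFinset i,
        2 * ((s j * x i - s i * x j) ^ 2 / (P i + P j)) =
        2 * ∑ i, ∑ j ∈ G.neighborFinset i, (s j * x i - s i * x j) ^ 2 / (P i + P j) := by
      rw [Finset.mul_sum]
      exact Finset.sum_congr rfl fun i _ => (Finset.mul_sum _ _ _).symm
    rw [h3] at h2
    linarith
  have hQnn : ∀ x : Fin k → ℝ,
      0 ≤ ∑ i, ∑ j ∈ G.neighborFinset i, (s j * x i - s i * x j) ^ 2 / (P i + P j) := by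
    intro x
    exact Finset.sum_nonneg fun i _ => Finset.sum_nonneg fun j _ =>
      div_nonneg (sq_nonneg _) (hPpos i j).le
  refine ⟨?_, ?_, ?_⟩
  · -- A v = -v
    funext i
    have h0 : A.mulVec v i + v i = 0 := by
      rw [hB v i]
      have hz : ∀ j ∈ G.neighborFinset i,
          (2 * s j / (P i + P j)) * (s j * v i - s i * v j) = 0 := by
        intro j _
        rw [hvs, hvs]
        ring
      rw [Finset.sum_congr rfl hz, Finset.sum_const_zero, mul_zero]
    have : A.mulVec v i = -v i := by linarith
    simpa using this
  · -- smallest eigenvalue ≥ -1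
    intro μ x hx hμ
    have hq := hQ x
    rw [hμ] at hq
    have hlhs : ∑ i, x i * ((μ • x) i + x i) = (μ + 1) * ∑ i, x i * x i := by
      rw [Finset.mul_sum]
      refine Finset.sum_congr rfl fun i _ => ?_
      simp only [Pi.smul_apply, smul_eq_mul]
      ring
    rw [hlhs] at hq
    have hxx : 0 < ∑ i, x i * x i := by
      obtain ⟨i, hi⟩ := Function.ne_iff.mp hx
      exact Finset.sum_pos' (fun j _ => mul_self_nonneg _)
        ⟨i, Finset.mem_univ i, mul_self_pos.mpr hi⟩
    have hrhs : 0 ≤ (μ + 1) * ∑ i, x i * x i := by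
      rw [hq]
      exact mul_nonneg (by positivity) (hQnn x)
    nlinarith
  · -- eigenspace of -1
    intro x hx
    have hq := hQ x
    have hzero : ∑ i, x i * (A.mulVec x i + x i) = 0 := by
      refine Finset.sum_eq_zero fun i _ => ?_
      have h := congrFun hx i
      simp only [Pi.neg_apply] at h
      rw [h]
      ring
    rw [hzero] at hq
    have hQ0 : ∑ i, ∑ j ∈ G.neighborFinset i,
        (s j * x i - s i * x j) ^ 2 / (P i + P j) = 0 := by
      have h := hq.symm
      rw [mul_eq_zero] at h
      rcases h with h | h
      · exact absurd h (by positivity)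
      · exact h
    have hterm : ∀ i j, G.Adj i j → s j * x i = s i * x j := by
      intro i j hij
      have h1 := (Finset.sum_eq_zero_iff_of_nonneg
        (fun i _ => Finset.sum_nonneg fun j _ =>
          div_nonneg (sq_nonneg _) (hPpos i j).le)).mp hQ0 i (Finset.mem_univ i)
      have h2 := (Finset.sum_eq_zero_iff_of_nonneg
        (fun j _ => div_nonneg (sq_nonneg _) (hPpos i j).le)).mp h1 j
        ((G.mem_neighborFinset i j).mpr hij)
      have h3 : (s j * x i - s i * x j) ^ 2 = 0 := by
        rcases div_eq_zero_iff.mp h2 with h | h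
        · exact h
        · exact absurd h (hPne i j)
      have h4 : s j * x i - s i * x j = 0 := by
        exact pow_eq_zero_iff (by norm_num) |>.mp h3
      linarith
    have hadj : ∀ i j, G.Adj i j → x i / s i = x j / s j := by
      intro i j hij
      rw [div_eq_div_iff (hs_pos i).ne' (hs_pos j).ne']
      have := hterm i j hij
      linarith [hterm i j hij]
    have hwalk : ∀ i j : Fin k, ∀ _ : G.Walk i j, x i / s i = x j / s j := by
      intro i j p
      induction p with
      | nil => rfl
      | cons h _ ih => exact (hadj _ _ h).trans ih
    have i0 : Fin k := ⟨0, by omega⟩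
    refine ⟨x i0 / s i0, ?_⟩
    funext i
    obtain ⟨p⟩ := hconn.preconnected i0 i
    have hc := hwalk i0 i p
    simp only [Pi.smul_apply, smul_eq_mul]
    rw [hvs, hc, div_mul_cancel₀ _ (hs_pos i).ne']
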